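/- Let s ≥ 0, u ≥ 0, ν₀, ν₁ ≥ 0 with ν₀ + ν₁ = 1, and let z : [0,∞) → [0,1] be a solution of the deterministic mutation–selection equation ż = s·z(1−z) + u·ν₀·(1−z) − u·ν₁·z. For n ∈ ℕ define F_n(t) = (1 − z(t))ⁿ. Then for every n ≥ 1 and t ≥ 0, F_n′(t) = n·s·(F_{n+1}(t) − F_n(t)) + n·u·ν₁·(F_{n−1}(t) − F_n(t)) − n·u·ν₀·F_n(t). (This is the generator duality between the deterministic mutation–selection equation and the line-counting process of the killed ASG in the deterministic limit, which has rates q(n,n+1) = ns, q(n,n−1) = nuν₁, q(n,Δ) = nuν₀.) -/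

import Mathlib

/-- Generator duality in the deterministic limit: if `z` solves the
mutation–selection equation, then `F_n(t) = (1 − z(t))ⁿ` satisfies
`F_n′ = n·s·(F_{n+1} − F_n) + n·u·ν₁·(F_{n−1} − F_n) − n·u·ν₀·F_n`. -/
theorem stmt_5 (s u ν₀ ν₁ : ℝ) (hs : 0 ≤ s) (hu : 0 ≤ u)
    (hν₀ : 0 ≤ ν₀) (hν₁ : 0 ≤ ν₁) (hν : ν₀ + ν₁ = 1)
    (z : ℝ → ℝ) (hz : ∀ t : ℝ, 0 ≤ t → z t ∈ Set.Icc (0 : ℝ) 1)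
    (hode : ∀ t : ℝ, 0 ≤ t →
      HasDerivAt z (s * z t * (1 - z t) + u * ν₀ * (1 - z t) - u * ν₁ * z t) t) :
    ∀ n : ℕ, 1 ≤ n → ∀ t : ℝ, 0 ≤ t →
      HasDerivAt (fun τ => (1 - z τ) ^ n)
        ((n : ℝ) * s * ((1 - z t) ^ (n + 1) - (1 - z t) ^ n)
          + (n : ℝ) * u * ν₁ * ((1 - z t) ^ (n - 1) - (1 - z t) ^ n)
          - (n : ℝ) * u * ν₀ * (1 - z t) ^ n) t := by
  rintro ⟨⟩ hn t ht
  · omega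
  next m =>
    have h : HasDerivAt (fun τ => (1 - z τ) ^ (m + 1)) _ t := ((hode t ht).const_sub 1).pow (m + 1)
    convert h using 1
    simp only [Nat.add_sub_cancel]
    push_cast
    ring
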